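/- Let a, b, u be three distinct points in the plane forming a nondegenerate triangle. Then there exists a point c strictly inside triangle (a, b, u) lying on the circle with diameter au or on the circle with diameter bu. -/

import Mathlib

open Metric RealInnerProductSpace

open InnerProductGeometry in
/-- Thales condition as an inner product. -/
lemma dist_midpoint_iff_inner {E : Type*} [NormedAddCommGroup E] [InnerProductSpace ℝ E]
    (a u c : E) :
    dist c (midpoint ℝ a u) = dist a u / 2 ↔ (inner ℝ (c - a) (c - u) : ℝ) = 0 := by
  rw [inner_eq_zero_iff_angle_eq_pi_div_two, ← norm_add_eq_norm_sub_iff_angle_eq_pi_div_two]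
  have h1 : c - midpoint ℝ a u = (2:ℝ)⁻¹ • ((c - a) + (c - u)) := by
    rw [midpoint_eq_smul_add, invOf_eq_inv]; module
  have h2 : ‖(c - a) - (c - u)‖ = ‖a - u‖ := by
    rw [show (c - a) - (c - u) = -(a - u) by abel, norm_neg]
  rw [dist_eq_norm, dist_eq_norm, h1, norm_smul, h2]
  have habs : ‖(2:ℝ)⁻¹‖ = 2⁻¹ := by norm_num
  rw [habs]
  constructor
  · intro hh; linarith
  · intro hh; rw [hh]; ring

/-- IVT inside a convex set: if a continuous function takes a negative and a
positive value on a convex set with nonempty interior, it vanishes at an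
interior point. -/
lemma exists_zero_in_interior {E : Type*} [NormedAddCommGroup E] [NormedSpace ℝ E]
    {s : Set E} (hs : Convex ℝ s) {f : E → ℝ} (hf : Continuous f)
    {g p q : E} (hg : g ∈ interior s) (hp : p ∈ s) (hq : q ∈ s)
    (hfp : f p < 0) (hfq : 0 < f q) : ∃ c ∈ interior s, f c = 0 := by
  -- perturb a point of `s` into the interior, keeping the sign of `f`
  have key : ∀ (x : E), x ∈ s → ∀ (U : Set E), IsOpen U → x ∈ U →
      ∃ x' ∈ interior s, x' ∈ U := by
    intro x hx U hU hxU
    have hcont : Continuous fun t : ℝ => t • g + (1 - t) • x := by continuity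
    have h0 : (fun t : ℝ => t • g + (1 - t) • x) 0 = x := by simp
    have htend : Filter.Tendsto (fun t : ℝ => t • g + (1 - t) • x)
        (nhdsWithin 0 (Set.Ioi 0)) (nhds x) := by
      simpa using (hcont.tendsto 0).mono_left nhdsWithin_le_nhds
    have hev : ∀ᶠ t in nhdsWithin (0:ℝ) (Set.Ioi 0),
        (t • g + (1 - t) • x) ∈ U := htend.eventually (hU.eventually_mem hxU)
    have hIoo : ∀ᶠ t in nhdsWithin (0:ℝ) (Set.Ioi 0), t ∈ Set.Ioo (0:ℝ) 1 :=
      Filter.eventually_of_mem (Ioo_mem_nhdsGT_of_mem ⟨le_refl 0, zero_lt_one⟩)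
        (fun t ht => ht)
    obtain ⟨t, htU, ht0, ht1⟩ := (hev.and hIoo).exists
    refine ⟨t • g + (1 - t) • x,
      hs.combo_interior_closure_mem_interior hg (subset_closure hx) ht0 (by linarith)
        (by ring), htU⟩
  obtain ⟨p', hp', hp'neg⟩ := key p hp (f ⁻¹' (Set.Iio 0)) (isOpen_Iio.preimage hf) hfp
  obtain ⟨q', hq', hq'pos⟩ := key q hq (f ⁻¹' (Set.Ioi 0)) (isOpen_Ioi.preimage hf) hfq
  simp only [Set.mem_preimage, Set.mem_Iio, Set.mem_Ioi] at hp'neg hq'pos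
  -- IVT along the segment from `p'` to `q'`
  set γ : ℝ → E := fun t => (1 - t) • p' + t • q' with hγ
  have hγc : Continuous γ := by continuity
  have hsub : Set.Icc (f (γ 0)) (f (γ 1)) ⊆ (f ∘ γ) '' Set.Icc 0 1 :=
    intermediate_value_Icc zero_le_one (hf.comp hγc).continuousOn
  have h0γ : γ 0 = p' := by simp [hγ]
  have h1γ : γ 1 = q' := by simp [hγ]
  have h0mem : (0:ℝ) ∈ Set.Icc (f (γ 0)) (f (γ 1)) := by
    rw [h0γ, h1γ]; exact ⟨hp'neg.le, hq'pos.le⟩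
  obtain ⟨t, ht, hft⟩ := hsub h0mem
  refine ⟨γ t, ?_, hft⟩
  exact hs.interior.segment_subset hp' hq'
    ⟨1 - t, t, by linarith [ht.2], ht.1, by ring, rfl⟩

/-- For any nondegenerate triangle `(a, b, u)` in the plane, there is a point `c`
strictly inside the triangle that lies on the circle with diameter `au` (the
Thales circle of `a` and `u`) or on the circle with diameter `bu`. -/
theorem exists_thales_point_in_triangle
    (a b u : EuclideanSpace ℝ (Fin 2))
    (h : AffineIndependent ℝ ![a, b, u]) :
    ∃ c ∈ interior (convexHull ℝ ({a, b, u} : Set (EuclideanSpace ℝ (Fin 2)))),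
      dist c (midpoint ℝ a u) = dist a u / 2 ∨
      dist c (midpoint ℝ b u) = dist b u / 2 := by
  set S : Set (EuclideanSpace ℝ (Fin 2)) := convexHull ℝ {a, b, u} with hSdef
  have hS : Convex ℝ S := convex_convexHull ℝ _
  have ha : a ∈ S := subset_convexHull ℝ _ (by simp)
  have hb : b ∈ S := subset_convexHull ℝ _ (by simp)
  have hu : u ∈ S := subset_convexHull ℝ _ (by simp)
  have hinj := h.injective
  have hau : a ≠ u := by
    intro he
    have : (0 : Fin 3) = 2 := hinj (by simp [he])
    exact absurd this (by decide)
  have hbu : b ≠ u := by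
    intro he
    have : (1 : Fin 3) = 2 := hinj (by simp [he])
    exact absurd this (by decide)
  have hab : a ≠ b := by
    intro he
    have : (0 : Fin 3) = 1 := hinj (by simp [he])
    exact absurd this (by decide)
  -- interior is nonempty
  have hrange : Set.range ![a, b, u] = ({a, b, u} : Set (EuclideanSpace ℝ (Fin 2))) := by
    simp only [Matrix.range_cons, Matrix.range_empty, Set.union_empty,
      Set.union_singleton]
    ext x; simp; tauto
  have htop : affineSpan ℝ ({a, b, u} : Set (EuclideanSpace ℝ (Fin 2))) = ⊤ := by
    rw [← hrange]
    exact h.affineSpan_eq_top_iff_card_eq_finrank_add_one.mpr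
      (by simp [finrank_euclideanSpace_fin])
  have hne : (interior S).Nonempty := by
    rw [hS.interior_nonempty_iff_affineSpan_eq_top, hSdef, affineSpan_convexHull, htop]
  obtain ⟨g, hg⟩ := hne
  -- midpoints lie in S
  have hmau : midpoint ℝ a u ∈ S := hS.segment_subset ha hu (midpoint_mem_segment a u)
  have hmbu : midpoint ℝ b u ∈ S := hS.segment_subset hb hu (midpoint_mem_segment b u)
  -- f negative at midpoints
  have mid_neg : ∀ x y : EuclideanSpace ℝ (Fin 2), x ≠ y →
      (inner ℝ (midpoint ℝ x y - x) (midpoint ℝ x y - y) : ℝ) < 0 := by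
    intro x y hxy
    have h1 : midpoint ℝ x y - x = (2:ℝ)⁻¹ • (y - x) := by
      rw [midpoint_eq_smul_add, invOf_eq_inv]; module
    have h2 : midpoint ℝ x y - y = -((2:ℝ)⁻¹ • (y - x)) := by
      rw [midpoint_eq_smul_add, invOf_eq_inv]; module
    rw [h1, h2, inner_neg_right, real_inner_smul_left, real_inner_smul_right,
      real_inner_self_eq_norm_sq]
    have : 0 < ‖y - x‖ := norm_pos_iff.mpr (sub_ne_zero.mpr hxy.symm)
    nlinarith
  rcases lt_or_ge 0 ((inner ℝ (b - a) (b - u) : ℝ)) with hcase | hcase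
  · -- angle at b is acute: use the circle with diameter `a u`
    have hfc : Continuous fun x : EuclideanSpace ℝ (Fin 2) => (inner ℝ (x - a) (x - u) : ℝ) := by
      exact (continuous_id.sub continuous_const).inner (continuous_id.sub continuous_const)
    obtain ⟨c, hc, hc0⟩ := exists_zero_in_interior hS hfc hg hmau hb
      (mid_neg a u hau) hcase
    exact ⟨c, hc, Or.inl ((dist_midpoint_iff_inner a u c).mpr hc0)⟩
  · -- angle at b is not acute: then the angle at a is acute; use circle `b u`
    have hapos : 0 < (inner ℝ (a - b) (a - u) : ℝ) := by
      have hsplit : (inner ℝ (a - b) (a - u) : ℝ) = ‖a - b‖ ^ 2 - (inner ℝ (b - a) (b - u) : ℝ) := by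
        have : (a : EuclideanSpace ℝ (Fin 2)) - u = (a - b) + (b - u) := by abel
        rw [this, inner_add_right, real_inner_self_eq_norm_sq,
          show (a : EuclideanSpace ℝ (Fin 2)) - b = -(b - a) by abel, inner_neg_left]
        ring
      have : 0 < ‖a - b‖ := norm_pos_iff.mpr (sub_ne_zero.mpr hab)
      nlinarith
    have hfc : Continuous fun x : EuclideanSpace ℝ (Fin 2) => (inner ℝ (x - b) (x - u) : ℝ) := by
      exact (continuous_id.sub continuous_const).inner (continuous_id.sub continuous_const)
    obtain ⟨c, hc, hc0⟩ := exists_zero_in_interior hS hfc hg hmbu ha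
      (mid_neg b u hbu) hapos
    exact ⟨c, hc, Or.inr ((dist_midpoint_iff_inner b u c).mpr hc0)⟩
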